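/- Let n ≥ 2, let d_1, …, d_{n−1} be positive integers with product P = ∏_{i<n} d_i, and let d_n be an integer with 1 ≤ d_n ≤ P − 1. Then R(d_1, …, d_{n−1}, d_n) = R(d_1, …, d_{n−1}, P − d_n). -/

import Mathlib

open scoped ComplexConjugate

noncomputable section

def rhoK {n : ℕ} (d : Fin n → ℕ) (ψ : (∀ i, Fin (d i)) → ℂ) (k : Fin n) :
    Matrix (Fin (d k)) (Fin (d k)) ℂ :=
  Matrix.of fun j l =>
    ∑ x : ∀ i, Fin (d i), if x k = j then ψ x * conj (ψ (Function.update x k l)) else 0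

def Normalized {n : ℕ} {d : Fin n → ℕ} (ψ : (∀ i, Fin (d i)) → ℂ) : Prop :=
  ∑ x, ‖ψ x‖ ^ 2 = 1

def IsLME {n : ℕ} (d : Fin n → ℕ) (ψ : (∀ i, Fin (d i)) → ℂ) : Prop :=
  Normalized ψ ∧ ∀ k, rhoK d ψ k = (1 / (d k : ℂ)) • 1

def LMEExists (n : ℕ) (d : Fin n → ℕ) : Prop := ∃ ψ, IsLME d ψ

def Nfun {n : ℕ} (k : Fin n → ℕ) : ℤ :=
  ∑ S ∈ Finset.univ.powerset.filter (fun S : Finset (Fin n) => S.Nonempty),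
    (-1 : ℤ) ^ (S.card + 1) * ((Finset.gcd S k : ℕ) : ℤ)

def Rfun {n : ℕ} (d : Fin n → ℕ) : ℤ :=
  (∏ i, (d i : ℤ)) - Nfun (fun i => (d i) ^ 2)

def Dfun {n : ℕ} (d : Fin n → ℕ) : ℤ :=
  (∏ i, (d i : ℤ)) - 1 - ∑ i, ((d i : ℤ) ^ 2 - 1)

lemma gcd_sq_aux (a b : ℕ) : Nat.gcd (a^2) (b^2) = Nat.gcd a b ^ 2 := by
  rcases Nat.eq_zero_or_pos (Nat.gcd a b) with h | h
  · obtain ⟨rfl, rfl⟩ := Nat.gcd_eq_zero_iff.mp h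
    simp
  · obtain ⟨g, a', b', hg, co, rfl, rfl⟩ := Nat.exists_coprime' h
    rw [mul_pow, mul_pow, Nat.gcd_mul_right, Nat.gcd_mul_right, co.gcd_eq_one,
      Nat.Coprime.gcd_eq_one (Nat.Coprime.pow 2 2 co), one_mul, one_mul]

lemma finset_gcd_sq {α : Type*} [DecidableEq α] (s : Finset α) (f : α → ℕ) :
    s.gcd (fun i => f i ^ 2) = (s.gcd f) ^ 2 := by
  induction s using Finset.induction with
  | empty => simp
  | insert _ _ h ih =>
      rw [Finset.gcd_insert, Finset.gcd_insert, ih]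
      exact gcd_sq_aux _ _

lemma gcd_reflect {H P e e' : ℕ} (hH : H ∣ P) (hsum : e + e' = P) :
    Nat.gcd H e = Nat.gcd H e' := by
  have h1 : ∀ x y : ℕ, x + y = P → Nat.gcd H x ∣ Nat.gcd H y := by
    intro x y hxy
    refine Nat.dvd_gcd (Nat.gcd_dvd_left _ _) ?_
    have hP : Nat.gcd H x ∣ P := (Nat.gcd_dvd_left H x).trans hH
    have := Nat.dvd_sub hP (Nat.gcd_dvd_right H x)
    rwa [← hxy, Nat.add_sub_cancel_left] at this
  exact Nat.dvd_antisymm (h1 e e' hsum) (h1 e' e (by omega))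

/-- R is invariant under replacing the last dimension d_n by
P - d_n, where P is the product of the other dimensions. -/
theorem R_invariant_reflection (m : ℕ) (hm : 1 ≤ m) (d : Fin m → ℕ)
    (hd : ∀ i, 1 ≤ d i) (dn : ℕ) (hdn1 : 1 ≤ dn) (hdn2 : dn ≤ (∏ i, d i) - 1) :
    Rfun (Fin.snoc d dn) = Rfun (Fin.snoc d ((∏ i, d i) - dn)) := by
  set P := ∏ i, d i with hPdef
  have hP : 0 < P := Finset.prod_pos fun i _ => hd i
  set e' := P - dn with he'def
  have he : dn + e' = P := by omega
  -- product of snoc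
  have hprod : ∀ e : ℕ, (∏ i : Fin (m+1), (((Fin.snoc d e : Fin (m+1) → ℕ) i : ℕ) : ℤ)) = (P : ℤ) * e := by
    intro e
    have : (∏ i : Fin (m+1), ((Fin.snoc d e : Fin (m+1) → ℕ) i : ℕ)) = P * e := Fin.prod_snoc e d
    calc (∏ i : Fin (m+1), (((Fin.snoc d e : Fin (m+1) → ℕ) i : ℕ) : ℤ))
        = (((∏ i : Fin (m+1), ((Fin.snoc d e : Fin (m+1) → ℕ) i : ℕ)) : ℕ) : ℤ) := by push_cast; rfl
      _ = (P : ℤ) * e := by rw [this]; push_cast; ring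
  -- key gcd invariance
  have key : ∀ S : Finset (Fin (m+1)), S ≠ {Fin.last m} →
      Finset.gcd S (fun i => ((Fin.snoc d dn : Fin (m+1) → ℕ) i)^2) =
      Finset.gcd S (fun i => ((Fin.snoc d e' : Fin (m+1) → ℕ) i)^2) := by
    intro S hne
    by_cases hl : Fin.last m ∈ S
    · set T := S.erase (Fin.last m) with hTdef
      have hT : T.Nonempty := by
        rw [Finset.nonempty_iff_ne_empty]
        intro hemp
        apply hne
        apply Finset.eq_singleton_iff_unique_mem.mpr
        refine ⟨hl, fun x hx => ?_⟩
        by_contra hxne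
        have : x ∈ T := Finset.mem_erase.mpr ⟨hxne, hx⟩
        rw [hemp] at this
        exact absurd this (Finset.notMem_empty x)
      have hSi : S = insert (Fin.last m) T := (Finset.insert_erase hl).symm
      have hTeq : Finset.gcd T (fun i => (Fin.snoc d dn : Fin (m+1) → ℕ) i) =
          Finset.gcd T (fun i => (Fin.snoc d e' : Fin (m+1) → ℕ) i) := by
        refine Finset.gcd_congr rfl fun i hi => ?_
        have hine : i ≠ Fin.last m := (Finset.mem_erase.mp hi).1
        obtain ⟨j, rfl⟩ := Fin.exists_castSucc_eq.mpr hine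
        simp [Fin.snoc_castSucc]
      set H := Finset.gcd T (fun i => (Fin.snoc d dn : Fin (m+1) → ℕ) i) with hHdef
      have hHP : H ∣ P := by
        obtain ⟨j, hj⟩ := hT
        have hjne : j ≠ Fin.last m := (Finset.mem_erase.mp hj).1
        obtain ⟨j', rfl⟩ := Fin.exists_castSucc_eq.mpr hjne
        have h1 : H ∣ (Fin.snoc d dn : Fin (m+1) → ℕ) (Fin.castSucc j') := Finset.gcd_dvd hj
        rw [Fin.snoc_castSucc] at h1
        exact h1.trans (Finset.dvd_prod_of_mem d (Finset.mem_univ j'))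
      rw [hSi, Finset.gcd_insert, Finset.gcd_insert, finset_gcd_sq, finset_gcd_sq,
        ← hTeq, ← hHdef, Fin.snoc_last, Fin.snoc_last]
      show Nat.gcd (dn^2) (H^2) = Nat.gcd (e'^2) (H^2)
      rw [gcd_sq_aux, gcd_sq_aux, Nat.gcd_comm dn H, Nat.gcd_comm e' H,
        gcd_reflect hHP he]
    · refine Finset.gcd_congr rfl fun i hi => ?_
      have hine : i ≠ Fin.last m := fun h => hl (h ▸ hi)
      obtain ⟨j, rfl⟩ := Fin.exists_castSucc_eq.mpr hine
      simp [Fin.snoc_castSucc]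
  -- split the sum
  have hmem : ({Fin.last m} : Finset (Fin (m+1))) ∈
      Finset.univ.powerset.filter (fun S : Finset (Fin (m+1)) => S.Nonempty) := by
    simp
  set A := Finset.univ.powerset.filter (fun S : Finset (Fin (m+1)) => S.Nonempty) with hAdef
  have hsplit : ∀ e : ℕ,
      (∑ S ∈ A, (-1 : ℤ) ^ (S.card + 1) * ((Finset.gcd S (fun i => ((Fin.snoc d e : Fin (m+1) → ℕ) i)^2) : ℕ) : ℤ))
      = ((e : ℤ))^2 + ∑ S ∈ A.erase {Fin.last m},
          (-1 : ℤ) ^ (S.card + 1) * ((Finset.gcd S (fun i => ((Fin.snoc d e : Fin (m+1) → ℕ) i)^2) : ℕ) : ℤ) := by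
    intro e
    rw [← Finset.add_sum_erase A _ hmem]
    congr 1
    rw [Finset.card_singleton]
    have : Finset.gcd ({Fin.last m} : Finset (Fin (m+1))) (fun i => ((Fin.snoc d e : Fin (m+1) → ℕ) i)^2)
        = e ^ 2 := by
      simp [Finset.gcd_singleton, Fin.snoc_last]
    rw [this]
    push_cast
    ring
  have hsum_eq : (∑ S ∈ A.erase {Fin.last m},
        (-1 : ℤ) ^ (S.card + 1) * ((Finset.gcd S (fun i => ((Fin.snoc d dn : Fin (m+1) → ℕ) i)^2) : ℕ) : ℤ))
      = ∑ S ∈ A.erase {Fin.last m},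
        (-1 : ℤ) ^ (S.card + 1) * ((Finset.gcd S (fun i => ((Fin.snoc d e' : Fin (m+1) → ℕ) i)^2) : ℕ) : ℤ) := by
    refine Finset.sum_congr rfl fun S hS => ?_
    have hne : S ≠ {Fin.last m} := (Finset.mem_erase.mp hS).1
    rw [key S hne]
  -- put it together
  unfold Rfun Nfun
  rw [hprod dn, hprod e', hsplit dn, hsplit e', hsum_eq]
  have hcast : (dn : ℤ) + (e' : ℤ) = (P : ℤ) := by exact_mod_cast he
  linear_combination ((e' : ℤ) - (dn : ℤ)) * hcast
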